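/- (O(1/t) rate of the PC-algorithm II with outer perturbations.) Let ν ∈ (0,1), μ ∈ [0, 1 − ν), γ ∈ (0,2), and let {x^k}, {y^k}, {β_k}, {e1^k}, {e2^k}, {ρ_k}, {d^k} be generated by the PC-algorithm II with outer perturbations: for every k ≥ 0, β_k > 0; y^k = P_C(x^k − β_k F(x^k) + e1^k); β_k‖F(x^k) − F(y^k)‖ ≤ ν‖x^k − y^k‖; ‖e1^k‖ ≤ μ‖x^k − y^k‖; d^k := (x^k − y^k) − β_k(F(x^k) − F(y^k)) + e1^k ≠ 0; ρ_k := ⟨x^k − y^k, d^k⟩/‖d^k‖²; x^{k+1} = P_C(x^k − γ ρ_k β_k F(y^k) + e2^k); and assume Σ_{k=0}^∞ ‖e2^k‖ < +∞ and {x^k} is bounded. For an integer t > 0 set Υ_t := Σ_{k=0}^t ρ_k β_k (assumed positive) and y_t := (1/Υ_t) Σ_{k=0}^t ρ_k β_k y^k. Then for every x ∈ C, ⟨F(x), y_t − x⟩ ≤ (1/(2γΥ_t))·(‖x − x^0‖² + 2M(x)), where M(x) := (sup_k ‖x^{k+1} − x‖)·Σ_{k=0}^∞ ‖e2^k‖.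 -/

import Mathlib

open RealInnerProductSpace

set_option maxHeartbeats 1600000 in
theorem stmt_9 {H : Type*} [NormedAddCommGroup H] [InnerProductSpace ℝ H]
    [CompleteSpace H]
    (C : Set H) (hCne : C.Nonempty) (hCcl : IsClosed C) (hCcv : Convex ℝ C)
    (P : H → H) (hPmem : ∀ u : H, P u ∈ C)
    (hPchar : ∀ u : H, ∀ c ∈ C, ⟪u - P u, c - P u⟫ ≤ 0)
    (F : H → H) (hmono : ∀ u v : H, 0 ≤ ⟪F u - F v, u - v⟫)
    (L : ℝ) (hL : 0 < L) (hLip : ∀ u v : H, ‖F u - F v‖ ≤ L * ‖u - v‖)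
    (ν μ γ : ℝ) (hν : ν ∈ Set.Ioo (0 : ℝ) 1) (hμ : μ ∈ Set.Ico (0 : ℝ) (1 - ν))
    (hγ : γ ∈ Set.Ioo (0 : ℝ) 2)
    (e1 e2 : ℕ → H) (he2 : Summable (fun k => ‖e2 k‖))
    (x y : ℕ → H) (β : ℕ → ℝ) (d : ℕ → H) (ρ : ℕ → ℝ)
    (hβpos : ∀ k, 0 < β k)
    (hy : ∀ k, y k = P (x k - β k • F (x k) + e1 k))
    (hstep : ∀ k, β k * ‖F (x k) - F (y k)‖ ≤ ν * ‖x k - y k‖)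
    (he1b : ∀ k, ‖e1 k‖ ≤ μ * ‖x k - y k‖)
    (hd : ∀ k, d k = (x k - y k) - β k • (F (x k) - F (y k)) + e1 k)
    (hdne : ∀ k, d k ≠ 0)
    (hρ : ∀ k, ρ k = ⟪x k - y k, d k⟫ / ‖d k‖ ^ 2)
    (hx : ∀ k, x (k + 1) = P (x k - (γ * ρ k * β k) • F (y k) + e2 k))
    (hbdd : ∃ R : ℝ, ∀ k, ‖x k‖ ≤ R)
    (t : ℕ) (ht : 0 < t)
    (hΥ : 0 < ∑ k ∈ Finset.range (t + 1), ρ k * β k) :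
    ∀ z ∈ C,
      ⟪F z, ((∑ k ∈ Finset.range (t + 1), ρ k * β k)⁻¹ •
          ∑ k ∈ Finset.range (t + 1), (ρ k * β k) • y k) - z⟫ ≤
        (1 / (2 * γ * ∑ k ∈ Finset.range (t + 1), ρ k * β k)) *
          (‖z - x 0‖ ^ 2 +
            2 * ((⨆ k : ℕ, ‖x (k + 1) - z‖) * ∑' k : ℕ, ‖e2 k‖)) := by
  intro z hz
  set S : ℝ := ∑ k ∈ Finset.range (t + 1), ρ k * β k with hS
  have hSne : S ≠ 0 := ne_of_gt hΥ
  -- nonnegativity of ρ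
  have hxyd : ∀ k, 0 ≤ ⟪x k - y k, d k⟫ := by
    intro k
    rw [hd k]
    have e : ⟪x k - y k, (x k - y k) - β k • (F (x k) - F (y k)) + e1 k⟫
        = ‖x k - y k‖ ^ 2 - β k * ⟪x k - y k, F (x k) - F (y k)⟫
          + ⟪x k - y k, e1 k⟫ := by
      rw [inner_add_right, inner_sub_right, real_inner_smul_right,
        real_inner_self_eq_norm_sq]
    rw [e]
    have h1 := real_inner_le_norm (x k - y k) (F (x k) - F (y k))
    have h2 := hstep k
    have h3 := neg_abs_le (⟪x k - y k, e1 k⟫ : ℝ)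
    have h3' := abs_real_inner_le_norm (x k - y k) (e1 k)
    have h4 := he1b k
    have hb := (hβpos k).le
    have hv := norm_nonneg (x k - y k)
    have hm1 : β k * ⟪x k - y k, F (x k) - F (y k)⟫
        ≤ β k * (‖x k - y k‖ * ‖F (x k) - F (y k)‖) :=
      mul_le_mul_of_nonneg_left h1 hb
    have hm2 : ‖x k - y k‖ * (β k * ‖F (x k) - F (y k)‖)
        ≤ ‖x k - y k‖ * (ν * ‖x k - y k‖) :=
      mul_le_mul_of_nonneg_left h2 hv
    have hm3 : ‖x k - y k‖ * ‖e1 k‖ ≤ ‖x k - y k‖ * (μ * ‖x k - y k‖) :=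
      mul_le_mul_of_nonneg_left h4 hv
    have hcoef : 0 ≤ 1 - ν - μ := by
      have := hμ.2; linarith
    nlinarith [sq_nonneg ‖x k - y k‖, mul_nonneg hcoef (sq_nonneg ‖x k - y k‖)]
  have hρnn : ∀ k, 0 ≤ ρ k := by
    intro k
    rw [hρ k]
    exact div_nonneg (hxyd k) (sq_nonneg _)
  have hγr : ∀ k, 0 ≤ γ * ρ k := fun k => mul_nonneg hγ.1.le (hρnn k)
  have hrd : ∀ k, ⟪x k - y k, d k⟫ = ρ k * ‖d k‖ ^ 2 := by
    intro k
    have hdnz : ‖d k‖ ^ 2 ≠ 0 := pow_ne_zero _ (norm_ne_zero_iff.mpr (hdne k))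
    rw [hρ k]
    rw [div_mul_cancel₀ _ hdnz]
  -- the key one-step inequality
  have key : ∀ k, 2 * γ * (ρ k * β k) * ⟪F z, y k - z⟫
      ≤ ‖x k - z‖ ^ 2 - ‖x (k + 1) - z‖ ^ 2
        + 2 * (‖e2 k‖ * ‖x (k + 1) - z‖) := by
    intro k
    set u : H := x k - (γ * ρ k * β k) • F (y k) + e2 k with hu
    have hx' : x (k + 1) = P u := hx k
    -- I1 : identity
    have I1 : ‖x (k + 1) - z‖ ^ 2
        = ‖x k - z‖ ^ 2 + 2 * ⟪x (k + 1) - x k, x (k + 1) - z⟫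
          - ‖x (k + 1) - x k‖ ^ 2 := by
      have ea : x (k + 1) - x k = (x (k + 1) - z) - (x k - z) := by abel
      have hh := norm_sub_sq_real (x (k + 1) - z) (x k - z)
      rw [ea, inner_sub_left, real_inner_self_eq_norm_sq, hh]
      have := real_inner_comm (x k - z) (x (k + 1) - z)
      linarith
    -- I3 : split of F(y k) inner product
    have I3 : ⟪F (y k), x (k + 1) - z⟫
        = ⟪F (y k), y k - z⟫ + ⟪F (y k), x (k + 1) - y k⟫ := by
      rw [show x (k + 1) - z = (y k - z) + (x (k + 1) - y k) from by abel,
        inner_add_right]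
    -- I2' : projection inequality at x^{k+1}
    have hproj := hPchar u z hz
    rw [← hx'] at hproj
    have split : ⟪x (k + 1) - x k, x (k + 1) - z⟫
        = ⟪x (k + 1) - u, x (k + 1) - z⟫ + ⟪u - x k, x (k + 1) - z⟫ := by
      rw [show x (k + 1) - x k = (x (k + 1) - u) + (u - x k) from by abel,
        inner_add_left]
    have h3' : ⟪x (k + 1) - u, x (k + 1) - z⟫ ≤ 0 := by
      rw [show x (k + 1) - u = -(u - x (k + 1)) from by abel,
        show x (k + 1) - z = -(z - x (k + 1)) from by abel, inner_neg_neg]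
      exact hproj
    have hua : u - x k = -((γ * ρ k * β k) • F (y k)) + e2 k := by
      rw [hu]; abel
    have huinner : ⟪u - x k, x (k + 1) - z⟫
        = -((γ * ρ k * β k) * ⟪F (y k), y k - z⟫)
          - (γ * ρ k * β k) * ⟪F (y k), x (k + 1) - y k⟫
          + ⟪e2 k, x (k + 1) - z⟫ := by
      rw [hua, inner_add_left, inner_neg_left, real_inner_smul_left, I3]
      ring
    have I2' : ⟪x (k + 1) - x k, x (k + 1) - z⟫
        ≤ -((γ * ρ k * β k) * ⟪F (y k), y k - z⟫)
          - (γ * ρ k * β k) * ⟪F (y k), x (k + 1) - y k⟫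
          + ⟪e2 k, x (k + 1) - z⟫ := by
      rw [split, huinner]; linarith
    -- projection inequality at y^k
    have hx1C : x (k + 1) ∈ C := by rw [hx k]; exact hPmem _
    have hproj2 := hPchar (x k - β k • F (x k) + e1 k) (x (k + 1)) hx1C
    rw [← hy k] at hproj2
    have hvd : (x k - β k • F (x k) + e1 k) - y k = d k - β k • F (y k) := by
      rw [hd k, smul_sub]; abel
    rw [hvd, inner_sub_left, real_inner_smul_left] at hproj2
    have m1 : γ * ρ k * ⟪d k, x (k + 1) - y k⟫
        ≤ γ * ρ k * (β k * ⟪F (y k), x (k + 1) - y k⟫) :=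
      mul_le_mul_of_nonneg_left (by linarith) (hγr k)
    have s5 : γ * ρ k * ⟪d k, x (k + 1) - y k⟫
        = γ * ρ k * ⟪d k, x (k + 1) - x k⟫ + γ * (ρ k) ^ 2 * ‖d k‖ ^ 2 := by
      have e5 : ⟪d k, x (k + 1) - y k⟫
          = ⟪d k, x (k + 1) - x k⟫ + ⟪d k, x k - y k⟫ := by
        rw [show x (k + 1) - y k = (x (k + 1) - x k) + (x k - y k) from by abel,
          inner_add_right]
      have e5' : ⟪d k, x k - y k⟫ = ρ k * ‖d k‖ ^ 2 := by
        rw [real_inner_comm]; exact hrd k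
      rw [e5, e5']; ring
    have hns : ‖(γ * ρ k) • d k‖ ^ 2 = (γ * ρ k) ^ 2 * ‖d k‖ ^ 2 := by
      rw [norm_smul, mul_pow, Real.norm_eq_abs, sq_abs]
    have I6 : -(2 * (γ * ρ k) * ⟪d k, x (k + 1) - x k⟫)
        - ‖x (k + 1) - x k‖ ^ 2 ≤ γ ^ 2 * (ρ k) ^ 2 * ‖d k‖ ^ 2 := by
      have h0 : (0 : ℝ) ≤ ‖(γ * ρ k) • d k + (x (k + 1) - x k)‖ ^ 2 :=
        sq_nonneg _
      rw [norm_add_sq_real, real_inner_smul_left, hns] at h0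
      nlinarith [h0]
    have I7 : γ ^ 2 * (ρ k) ^ 2 * ‖d k‖ ^ 2
        ≤ 2 * γ * (ρ k) ^ 2 * ‖d k‖ ^ 2 := by
      have hnn : 0 ≤ γ * ((ρ k) ^ 2 * ‖d k‖ ^ 2) :=
        mul_nonneg hγ.1.le (mul_nonneg (sq_nonneg _) (sq_nonneg _))
      nlinarith [hnn, hγ.2.le]
    have I8 := real_inner_le_norm (e2 k) (x (k + 1) - z)
    have I9 : ⟪F z, y k - z⟫ ≤ ⟪F (y k), y k - z⟫ := by
      have := hmono (y k) z
      rw [inner_sub_left] at this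
      linarith
    have m2 : 2 * (γ * (ρ k * β k)) * ⟪F z, y k - z⟫
        ≤ 2 * (γ * (ρ k * β k)) * ⟪F (y k), y k - z⟫ :=
      mul_le_mul_of_nonneg_left I9
        (by
          have := mul_nonneg (hγr k) (hβpos k).le
          linarith)
    linarith [I1, I2', m1, s5, I6, I7, I8, m2]
  -- boundedness / sup facts
  obtain ⟨R, hR⟩ := hbdd
  set Sup : ℝ := ⨆ k : ℕ, ‖x (k + 1) - z‖ with hSup
  have hbA : BddAbove (Set.range fun k : ℕ => ‖x (k + 1) - z‖) := by
    refine ⟨R + ‖z‖, ?_⟩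
    rintro _ ⟨k, rfl⟩
    have := norm_sub_le (x (k + 1)) z
    have := hR (k + 1)
    simp only []
    linarith [norm_sub_le (x (k + 1)) z, hR (k + 1)]
  have hSupk : ∀ k, ‖x (k + 1) - z‖ ≤ Sup := fun k =>
    le_ciSup hbA k
  have hSupnn : 0 ≤ Sup := le_trans (norm_nonneg _) (hSupk 0)
  set T : ℝ := ∑' k : ℕ, ‖e2 k‖ with hT
  -- summing up
  set W : ℝ := ∑ k ∈ Finset.range (t + 1), (ρ k * β k) * ⟪F z, y k - z⟫
    with hW
  have claimB : 2 * γ * W ≤ ‖x 0 - z‖ ^ 2 + 2 * (Sup * T) := by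
    have hsum := Finset.sum_le_sum (fun k (_ : k ∈ Finset.range (t + 1)) => key k)
    have hLHS : ∑ k ∈ Finset.range (t + 1),
        2 * γ * (ρ k * β k) * ⟪F z, y k - z⟫ = 2 * γ * W := by
      rw [hW, Finset.mul_sum]
      exact Finset.sum_congr rfl fun k _ => by ring
    have htel : ∑ k ∈ Finset.range (t + 1),
        (‖x k - z‖ ^ 2 - ‖x (k + 1) - z‖ ^ 2)
        = ‖x 0 - z‖ ^ 2 - ‖x (t + 1) - z‖ ^ 2 :=
      Finset.sum_range_sub' (fun k => ‖x k - z‖ ^ 2) (t + 1)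
    have herr : ∑ k ∈ Finset.range (t + 1), 2 * (‖e2 k‖ * ‖x (k + 1) - z‖)
        ≤ 2 * (Sup * T) := by
      have h1 : ∀ k ∈ Finset.range (t + 1),
          2 * (‖e2 k‖ * ‖x (k + 1) - z‖) ≤ 2 * (Sup * ‖e2 k‖) := by
        intro k _
        have := mul_le_mul_of_nonneg_left (hSupk k) (norm_nonneg (e2 k))
        nlinarith [this]
      calc ∑ k ∈ Finset.range (t + 1), 2 * (‖e2 k‖ * ‖x (k + 1) - z‖)
          ≤ ∑ k ∈ Finset.range (t + 1), 2 * (Sup * ‖e2 k‖) :=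
            Finset.sum_le_sum h1
        _ = 2 * Sup * ∑ k ∈ Finset.range (t + 1), ‖e2 k‖ := by
            rw [Finset.mul_sum]; exact Finset.sum_congr rfl fun k _ => by ring
        _ ≤ 2 * Sup * T := by
            have hpart : ∑ k ∈ Finset.range (t + 1), ‖e2 k‖ ≤ T :=
              Summable.sum_le_tsum _ (fun k _ => norm_nonneg _) he2
            have h2S : 0 ≤ 2 * Sup := by linarith
            exact mul_le_mul_of_nonneg_left hpart h2S
        _ = 2 * (Sup * T) := by ring
    have hsum2 : 2 * γ * W ≤ ‖x 0 - z‖ ^ 2 - ‖x (t + 1) - z‖ ^ 2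
        + 2 * (Sup * T) := by
      rw [← hLHS]
      calc ∑ k ∈ Finset.range (t + 1), 2 * γ * (ρ k * β k) * ⟪F z, y k - z⟫
          ≤ ∑ k ∈ Finset.range (t + 1),
            (‖x k - z‖ ^ 2 - ‖x (k + 1) - z‖ ^ 2
              + 2 * (‖e2 k‖ * ‖x (k + 1) - z‖)) := hsum
        _ = (‖x 0 - z‖ ^ 2 - ‖x (t + 1) - z‖ ^ 2)
            + ∑ k ∈ Finset.range (t + 1), 2 * (‖e2 k‖ * ‖x (k + 1) - z‖) := by
            rw [Finset.sum_add_distrib, htel]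
        _ ≤ ‖x 0 - z‖ ^ 2 - ‖x (t + 1) - z‖ ^ 2 + 2 * (Sup * T) := by
            linarith [herr]
    have := sq_nonneg ‖x (t + 1) - z‖
    linarith
  -- rewrite the goal
  have claimA : ⟪F z, (S⁻¹ • ∑ k ∈ Finset.range (t + 1), (ρ k * β k) • y k) - z⟫
      = S⁻¹ * W := by
    have hQ : ⟪F z, ∑ k ∈ Finset.range (t + 1), (ρ k * β k) • y k⟫
        = ∑ k ∈ Finset.range (t + 1), (ρ k * β k) * ⟪F z, y k⟫ := by
      rw [inner_sum]
      exact Finset.sum_congr rfl fun k _ => real_inner_smul_right _ _ _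
    have hWeq : W = (∑ k ∈ Finset.range (t + 1), (ρ k * β k) * ⟪F z, y k⟫)
        - S * ⟪F z, z⟫ := by
      rw [hW, hS, Finset.sum_mul]
      rw [← Finset.sum_sub_distrib]
      exact Finset.sum_congr rfl fun k _ => by
        rw [inner_sub_right]; ring
    rw [inner_sub_right, real_inner_smul_right, hQ, hWeq]
    field_simp
  rw [claimA, show ‖z - x 0‖ ^ 2 = ‖x 0 - z‖ ^ 2 from by rw [norm_sub_rev]]
  have h2γ : 0 < 2 * γ := by linarith [hγ.1]
  have hWle : W ≤ (‖x 0 - z‖ ^ 2 + 2 * (Sup * T)) / (2 * γ) := by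
    rw [le_div_iff₀ h2γ]
    linarith [claimB]
  have hfin : S⁻¹ * W ≤ S⁻¹ * ((‖x 0 - z‖ ^ 2 + 2 * (Sup * T)) / (2 * γ)) :=
    mul_le_mul_of_nonneg_left hWle (inv_nonneg.mpr hΥ.le)
  calc S⁻¹ * W ≤ S⁻¹ * ((‖x 0 - z‖ ^ 2 + 2 * (Sup * T)) / (2 * γ)) := hfin
    _ = 1 / (2 * γ * S) * (‖x 0 - z‖ ^ 2 + 2 * (Sup * T)) := by
        rw [one_div, mul_inv, div_eq_mul_inv]
        ring
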